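/- Let A ⊆ Λ²W* be a linear subspace. Suppose there exist an integer s ∈ {1,2,3} and linear subspaces U ⊆ U' of W with dim U = s and dim U' = 7−s such that ω(u,u') = 0 for all ω ∈ A, all u ∈ U and all u' ∈ U' (the condition characterizing non-semistability of A). Then every form ω ∈ A has rank at most 4. -/

import Mathlib

open Matrix

noncomputable section

abbrev W : Type := Fin 6 → ℂ
abbrev Form : Type := Matrix (Fin 6) (Fin 6) ℂ

/-- The skew-symmetric bilinear form associated to a matrix: `ω(u,v) = uᵀ M v`. -/
def Form.apply (M : Form) (u v : W) : ℂ := u ⬝ᵥ M *ᵥ v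

/-- A matrix represents a skew-symmetric (alternating) bilinear form iff `Mᵀ = -M`. -/
def Form.IsSkew (M : Form) : Prop := Mᵀ = -M

/-- Standard basis vectors of `W` (also used as the dual basis of `W*`). -/
def e (i : Fin 6) : Fin 6 → ℂ := Pi.single i 1

/-- Wedge of two covectors: `(φ∧ψ)(u,u') = φ(u)ψ(u') − ψ(u)φ(u')`. -/
def wedge (φ ψ : Fin 6 → ℂ) : Form := vecMulVec φ ψ - vecMulVec ψ φ

/-- Kernel of the linear map `u ↦ ω(u,·)`, i.e. of `u ↦ Mᵀ u`. -/
def Form.kernel (M : Form) : Submodule ℂ W := LinearMap.ker (Matrix.mulVecLin Mᵀ)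

/-- The action of `g ∈ GL(W)` on forms: `(g·ω)(u,u') = ω(gu,gu')`, as a linear map on forms. -/
def actLin (g : Matrix (Fin 6) (Fin 6) ℂ) : Form →ₗ[ℂ] Form where
  toFun M := gᵀ * M * g
  map_add' M N := by simp [add_mul, mul_add]
  map_smul' c M := by simp [mul_smul_comm, smul_mul_assoc]

/-- The geometric criterion for non-stability (Theorem 2.3(2)). -/
def Nonstable (A : Submodule ℂ Form) : Prop :=
  ∃ s : ℕ, s ∈ ({1, 2, 3} : Set ℕ) ∧
    ∃ U U' : Submodule ℂ W, U ≤ U' ∧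
      Module.finrank ℂ U = s ∧ Module.finrank ℂ U' = 6 - s ∧
      ∀ M ∈ A, ∀ u ∈ U, ∀ u' ∈ U', Form.apply M u u' = 0

/-- The geometric criterion for non-semistability (Theorem 2.3(1)). -/
def NonSemistable (A : Submodule ℂ Form) : Prop :=
  ∃ s : ℕ, s ∈ ({1, 2, 3} : Set ℕ) ∧
    ∃ U U' : Submodule ℂ W, U ≤ U' ∧
      Module.finrank ℂ U = s ∧ Module.finrank ℂ U' = 7 - s ∧
      ∀ M ∈ A, ∀ u ∈ U, ∀ u' ∈ U', Form.apply M u u' = 0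

/-- The plane `π_g` of general type. -/
def pi_g : Submodule ℂ Form :=
  Submodule.span ℂ {wedge (e 0) (e 3) + wedge (e 1) (e 4),
    wedge (e 0) (e 5) + wedge (e 2) (e 4),
    wedge (e 1) (e 5) - wedge (e 2) (e 3)}



open Module LinearMap


lemma even_finrank_of_alt_nondeg :
    ∀ (n : ℕ) (V : Type) [AddCommGroup V] [Module ℂ V] [FiniteDimensional ℂ V],
      Module.finrank ℂ V = n → ∀ B : LinearMap.BilinForm ℂ V, B.IsAlt → B.Nondegenerate →
        Even n := by
  intro n
  induction n using Nat.strong_induction_on with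
  | _ n ih =>
    intro V _ _ _ hn B halt hnd
    rcases Nat.eq_zero_or_pos n with h0 | hpos
    · simp [h0]
    have hnt : Nontrivial V := Module.nontrivial_of_finrank_pos (hn ▸ hpos)
    obtain ⟨x, hx0⟩ := exists_ne (0 : V)
    have hxy : ∃ y, B x y ≠ 0 := by
      by_contra hc
      push_neg at hc
      exact hx0 (hnd.1 x hc)
    obtain ⟨y, hxy⟩ := hxy
    have hyx : B y x ≠ 0 := by
      intro h; apply hxy; have := LinearMap.IsAlt.neg halt y x; rw [h] at this; simpa using this.symm
    set P : Submodule ℂ V := Submodule.span ℂ {x, y} with hP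
    have hrefl : B.IsRefl := halt.isRefl
    -- linear independence
    have hli : LinearIndependent ℂ ![x, y] := by
      rw [LinearIndependent.pair_iff]
      intro s t hst
      have h1 : B x (s • x + t • y) = 0 := by rw [hst]; simp
      simp only [map_add, _root_.map_smul, smul_eq_mul, halt x, mul_zero, zero_add] at h1
      have ht : t = 0 := by
        rcases mul_eq_zero.mp h1 with h | h
        · exact h
        · exact absurd h hxy
      subst ht
      simp only [zero_smul, add_zero, smul_eq_zero] at hst
      exact ⟨hst.resolve_right hx0, rfl⟩
    have hPrank : Module.finrank ℂ P = 2 := by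
      have hr : Set.range ![x, y] = {x, y} := by
        ext v; simp [Matrix.range_cons, Matrix.range_empty, or_comm]
      have := finrank_span_eq_card hli
      rw [hr] at this
      simpa using this
    -- restriction to P nondegenerate
    have hPnd : (B.restrict P).Nondegenerate := by
      refine (LinearMap.IsRefl.nondegenerate_iff_separatingLeft (hrefl.domRestrict P)).mpr ?_
      rintro ⟨z, hz⟩ hzp
      obtain ⟨a, b, rfl⟩ := Submodule.mem_span_pair.mp hz
      have hxP : x ∈ P := Submodule.subset_span (by simp)
      have hyP : y ∈ P := Submodule.subset_span (by simp)
      have h1 := hzp ⟨x, hxP⟩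
      have h2 := hzp ⟨y, hyP⟩
      simp only [LinearMap.BilinForm.restrict_apply, LinearMap.domRestrict_apply, LinearMap.domRestrict₁₂_apply,
        map_add, LinearMap.add_apply, _root_.map_smul, LinearMap.smul_apply, smul_eq_mul,
        halt x, halt y, mul_zero, add_zero, zero_add] at h1 h2
      have hb : b = 0 := by
        rcases mul_eq_zero.mp h1 with h | h
        · exact h
        · exact absurd h hyx
      have ha : a = 0 := by
        subst hb
        rcases mul_eq_zero.mp h2 with h | h
        · exact h
        · exact absurd h hxy
      ext
      simp [ha, hb]
    have hcompl := LinearMap.BilinForm.isCompl_orthogonal_of_restrict_nondegenerate hrefl hPnd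
    set Q := B.orthogonal P with hQ
    have hQrank : Module.finrank ℂ Q = n - 2 := by
      rw [LinearMap.BilinForm.finrank_orthogonal hnd, hPrank, hn]
    have hQnd : (B.restrict Q).Nondegenerate := by
      apply B.nondegenerate_restrict_of_disjoint_orthogonal hrefl
      rw [hQ, LinearMap.BilinForm.orthogonal_orthogonal hnd hrefl]
      exact hcompl.disjoint.symm
    have hQalt : (B.restrict Q).IsAlt := fun z => halt z
    have hle : 2 ≤ n := by
      rw [← hPrank, ← hn]; exact Submodule.finrank_le P
    have hev : Even (n - 2) := ih (n - 2) (by omega) Q hQrank (B.restrict Q) hQalt hQnd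
    obtain ⟨k, hk⟩ := hev
    exact ⟨k + 1, by omega⟩


/-- bilinear form of a matrix -/
def mBilin (M : Form) : LinearMap.BilinForm ℂ W :=
  LinearMap.mk₂ ℂ (fun x y => x ⬝ᵥ M *ᵥ y)
    (fun x x' y => by simp [add_dotProduct])
    (fun c x y => by simp [smul_dotProduct])
    (fun x y y' => by simp [Matrix.mulVec_add, dotProduct_add])
    (fun c x y => by simp [Matrix.mulVec_smul, dotProduct_smul])

@[simp] lemma mBilin_apply (M : Form) (x y : W) :
    mBilin M x y = x ⬝ᵥ M *ᵥ y := rfl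

def dotB : LinearMap.BilinForm ℂ W :=
  LinearMap.mk₂ ℂ (fun x y => x ⬝ᵥ y)
    (fun x x' y => by simp [add_dotProduct])
    (fun c x y => by simp [smul_dotProduct])
    (fun x y y' => by simp [dotProduct_add])
    (fun c x y => by simp [dotProduct_smul])

@[simp] lemma dotB_apply (x y : W) : dotB x y = x ⬝ᵥ y := rfl

lemma dotB_nondeg : dotB.Nondegenerate := by
  refine (LinearMap.IsRefl.nondegenerate_iff_separatingLeft
    (fun x y h => by simpa [dotProduct_comm] using h)).mpr ?_
  intro x hx
  funext i
  have := hx (Pi.single i 1)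
  simpa [single_dotProduct] using this

lemma dotB_refl : dotB.IsRefl := by
  intro x y h
  simpa [dotProduct_comm] using h

lemma finrank_W : Module.finrank ℂ W = 6 := by simp

lemma mBilin_alt_of_skew (M : Form) (hM : M.IsSkew) : (mBilin M).IsAlt := by
  intro x
  have h1 : x ⬝ᵥ M *ᵥ x = (x ᵥ* M) ⬝ᵥ x := Matrix.dotProduct_mulVec x M x
  have h2 : x ᵥ* M = Mᵀ *ᵥ x := by
    conv_lhs => rw [← Matrix.transpose_transpose M]
    exact Matrix.vecMul_transpose Mᵀ x
  rw [hM, Matrix.neg_mulVec] at h2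
  have h3 : x ⬝ᵥ M *ᵥ x = -(x ⬝ᵥ M *ᵥ x) :=
    calc x ⬝ᵥ M *ᵥ x = (x ᵥ* M) ⬝ᵥ x := h1
      _ = (-(M *ᵥ x)) ⬝ᵥ x := by rw [h2]
      _ = -((M *ᵥ x) ⬝ᵥ x) := neg_dotProduct _ _
      _ = -(x ⬝ᵥ M *ᵥ x) := by rw [dotProduct_comm]
  exact add_self_eq_zero.mp (eq_neg_iff_add_eq_zero.mp h3)

lemma mBilin_orth_top (M : Form) :
    (mBilin M).orthogonal ⊤ = LinearMap.ker M.mulVecLin := by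
  ext x
  rw [LinearMap.BilinForm.mem_orthogonal_iff, LinearMap.mem_ker]
  constructor
  · intro h
    funext i
    have := h (Pi.single i 1) Submodule.mem_top
    simpa [LinearMap.BilinForm.IsOrtho, single_dotProduct] using this
  · intro h n _
    show mBilin M n x = 0
    rw [mBilin_apply, Matrix.mulVecLin_apply] at *
    simp [h]

lemma rank_even_of_skew (M : Form) (hM : M.IsSkew) : Even M.rank := by
  classical
  have halt := mBilin_alt_of_skew M hM
  have hrefl : (mBilin M).IsRefl := halt.isRefl
  obtain ⟨C, hC⟩ := Submodule.exists_isCompl ((mBilin M).orthogonal ⊤)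
  have hdisj : Disjoint C ((mBilin M).orthogonal C) := by
    rw [Submodule.disjoint_def]
    intro v hvC hvO
    have hvK : v ∈ (mBilin M).orthogonal ⊤ := by
      rw [LinearMap.BilinForm.mem_orthogonal_iff]
      intro w _
      have hw : w ∈ (mBilin M).orthogonal ⊤ ⊔ C := by
        rw [hC.sup_eq_top]; exact Submodule.mem_top
      obtain ⟨k, hk, c, hc, rfl⟩ := Submodule.mem_sup.mp hw
      have h1 : mBilin M c v = 0 := hvO c hc
      have h2 : mBilin M k v = 0 :=
        hrefl v k ((LinearMap.BilinForm.mem_orthogonal_iff.mp hk) v Submodule.mem_top)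
      show mBilin M (k + c) v = 0
      rw [map_add, LinearMap.add_apply, h1, h2, add_zero]
    exact (Submodule.disjoint_def.mp hC.disjoint) v hvK hvC
  have hnd : ((mBilin M).restrict C).Nondegenerate :=
    (mBilin M).nondegenerate_restrict_of_disjoint_orthogonal hrefl hdisj
  have hCalt : ((mBilin M).restrict C).IsAlt := fun z => halt z
  have hrank : Module.finrank ℂ C = M.rank := by
    have h1 := Submodule.finrank_add_eq_of_isCompl hC
    have h2 := LinearMap.finrank_range_add_finrank_ker M.mulVecLin
    rw [mBilin_orth_top, finrank_W] at h1
    rw [finrank_W] at h2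
    have h3 : M.rank = Module.finrank ℂ (LinearMap.range M.mulVecLin) := rfl
    rw [h3]
    set a := Module.finrank ℂ (LinearMap.range M.mulVecLin)
    set b := Module.finrank ℂ (LinearMap.ker M.mulVecLin)
    set c := Module.finrank ℂ C
    omega
  exact even_finrank_of_alt_nondeg M.rank C hrank ((mBilin M).restrict C) hCalt hnd

/-- an unstable (non-semistable) linear system has generic rank ≤ 4. -/
theorem statement2 (A : Submodule ℂ Form) (hA : ∀ M ∈ A, Form.IsSkew M)
    (h : ∃ s : ℕ, s ∈ ({1, 2, 3} : Set ℕ) ∧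
      ∃ U U' : Submodule ℂ W, U ≤ U' ∧
        Module.finrank ℂ U = s ∧ Module.finrank ℂ U' = 7 - s ∧
        ∀ M ∈ A, ∀ u ∈ U, ∀ u' ∈ U', Form.apply M u u' = 0) :
    ∀ M ∈ A, Matrix.rank M ≤ 4 := by
  intro M hM
  obtain ⟨s, hs, U, U', hUU', hU, hU', hperp⟩ := h
  have hskew := hA M hM
  have heven := rank_even_of_skew M hskew
  have hs3 : s = 1 ∨ s = 2 ∨ s = 3 := by simpa using hs
  obtain ⟨C', hC'⟩ := Submodule.exists_isCompl U'
  have hC'rank : Module.finrank ℂ C' = s - 1 := by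
    have := Submodule.finrank_add_eq_of_isCompl hC'
    rw [hU', finrank_W] at this
    omega
  have hmap : Submodule.map M.mulVecLin U' ≤ dotB.orthogonal U := by
    rintro w ⟨u', hu', rfl⟩
    rw [LinearMap.BilinForm.mem_orthogonal_iff]
    intro u hu
    show dotB u (M.mulVecLin u') = 0
    rw [dotB_apply, Matrix.mulVecLin_apply]
    exact hperp M hM u hu u' hu'
  have horthrank : Module.finrank ℂ (dotB.orthogonal U) = 6 - s := by
    rw [LinearMap.BilinForm.finrank_orthogonal dotB_nondeg, hU, finrank_W]
  have hrange : LinearMap.range M.mulVecLin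
      = Submodule.map M.mulVecLin U' ⊔ Submodule.map M.mulVecLin C' := by
    rw [← Submodule.map_sup, hC'.sup_eq_top, Submodule.map_top]
  have h1 : Module.finrank ℂ (Submodule.map M.mulVecLin U') ≤ 6 - s :=
    horthrank ▸ Submodule.finrank_mono hmap
  have h2 : Module.finrank ℂ (Submodule.map M.mulVecLin C') ≤ s - 1 :=
    hC'rank ▸ Submodule.finrank_map_le _ _
  have h3 : M.rank = Module.finrank ℂ (LinearMap.range M.mulVecLin) := rfl
  have h4 := Submodule.finrank_add_le_finrank_add_finrank
    (Submodule.map M.mulVecLin U') (Submodule.map M.mulVecLin C')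
  rw [← hrange] at h4
  have hle5 : M.rank ≤ 5 := by rw [h3]; omega
  obtain ⟨k, hk⟩ := heven
  omega
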